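/- Let M ≥ 1, let 𝒳 be a finite nonempty set, and let P and Q be strictly positive probability mass functions on 𝒳^M. Suppose that for every site q ∈ {1,…,M} and every configuration x ∈ 𝒳^M, the full conditionals agree: P(x_q | x_{−q}) = Q(x_q | x_{−q}), i.e. P(x) / Σ_{y∈𝒳} P(x with q-th coordinate replaced by y) = Q(x) / Σ_{y∈𝒳} Q(x with q-th coordinate replaced by y). Then P = Q. In other words, a consistent collection of strictly positive single-site full conditional distributions determines the joint distribution uniquely. -/

import Mathlib

open Finset

/-- **Brook's lemma for finite state spaces.** Two strictly positive probability
mass functions on a finite product space `𝒳^M` with the same single-site full conditionals are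
equal: a consistent collection of strictly positive single-site full conditional distributions
determines the joint distribution uniquely. -/
theorem full_conditionals_determine_joint
    (M : ℕ) (hM : 1 ≤ M) (X : Type*) [Fintype X] [DecidableEq X] [Nonempty X]
    (P Q : (Fin M → X) → ℝ)
    (hPpos : ∀ x, 0 < P x) (hPsum : ∑ x : Fin M → X, P x = 1)
    (hQpos : ∀ x, 0 < Q x) (hQsum : ∑ x : Fin M → X, Q x = 1)
    (hcond : ∀ (q : Fin M) (x : Fin M → X),
      P x / (∑ y : X, P (Function.update x q y))
        = Q x / (∑ y : X, Q (Function.update x q y))) :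
    P = Q := by
  -- Single-site relation
  have hsingle : ∀ (q : Fin M) (x : Fin M → X) (y : X),
      P x * Q (Function.update x q y) = Q x * P (Function.update x q y) := by
    intro q x y
    set SP := ∑ y : X, P (Function.update x q y) with hSP
    set SQ := ∑ y : X, Q (Function.update x q y) with hSQ
    have hSPpos : 0 < SP := Finset.sum_pos (fun y _ => hPpos _) Finset.univ_nonempty
    have hSQpos : 0 < SQ := Finset.sum_pos (fun y _ => hQpos _) Finset.univ_nonempty
    have h1 : P x * SQ = Q x * SP := by
      have := hcond q x
      rw [← hSP, ← hSQ, div_eq_div_iff hSPpos.ne' hSQpos.ne'] at this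
      linarith [this]
    have h2 : P (Function.update x q y) * SQ = Q (Function.update x q y) * SP := by
      have := hcond q (Function.update x q y)
      have hupd : ∀ z : X, Function.update (Function.update x q y) q z
          = Function.update x q z := fun z => by
        funext i
        rcases eq_or_ne i q with h | h
        · subst h; simp
        · simp [Function.update_of_ne h]
      simp only [hupd] at this
      rw [← hSP, ← hSQ] at this
      field_simp at this
      linarith [this]
    have : (P x * Q (Function.update x q y)) * (SP * SQ)
        = (Q x * P (Function.update x q y)) * (SP * SQ) := by
      calc (P x * Q (Function.update x q y)) * (SP * SQ)
          = (P x * SQ) * (Q (Function.update x q y) * SP) := by ring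
        _ = (Q x * SP) * (P (Function.update x q y) * SQ) := by rw [h1, ← h2]
        _ = (Q x * P (Function.update x q y)) * (SP * SQ) := by ring
    have hne : SP * SQ ≠ 0 := by positivity
    exact mul_right_cancel₀ hne this
  -- Chain relation: for all x z, P x * Q z = Q x * P z
  have hchain : ∀ x z : Fin M → X, P x * Q z = Q x * P z := by
    intro x z
    let f : ℕ → Fin M → X := fun k i => if (i : ℕ) < k then z i else x i
    have hf0 : f 0 = x := by funext i; simp [f]
    have hfM : f M = z := by funext i; simp [f, i.isLt]
    have key : ∀ k, k ≤ M → P x * Q (f k) = Q x * P (f k) := by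
      intro k hk
      induction k with
      | zero => rw [hf0]; ring
      | succ n ih =>
        have hn : n < M := hk
        have ihn := ih (le_of_lt hn)
        have hupd : f (n + 1) = Function.update (f n) ⟨n, hn⟩ (z ⟨n, hn⟩) := by
          funext i
          by_cases hi : i = ⟨n, hn⟩
          · subst hi; simp [f, Function.update]
          · have hne : (i : ℕ) ≠ n := fun h => hi (Fin.ext h)
            simp only [Function.update, dif_neg hi, f]
            rcases lt_or_gt_of_ne hne with h | h
            · simp [h, Nat.lt_succ_of_lt h]
            · simp [Nat.lt_succ_iff, Nat.not_lt.mpr (le_of_lt h),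
                Nat.not_lt.mpr (Nat.succ_le_of_lt h)]
        have hstep := hsingle ⟨n, hn⟩ (f n) (z ⟨n, hn⟩)
        rw [← hupd] at hstep
        have hposP := hPpos (f n)
        have hposQ := hQpos (f n)
        have hne : P (f n) * Q (f n) ≠ 0 := by positivity
        apply mul_right_cancel₀ hne
        calc P x * Q (f (n + 1)) * (P (f n) * Q (f n))
            = (P x * Q (f n)) * (P (f n) * Q (f (n + 1))) := by ring
          _ = (Q x * P (f n)) * (Q (f n) * P (f (n + 1))) := by rw [ihn, hstep]
          _ = Q x * P (f (n + 1)) * (P (f n) * Q (f n)) := by ring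
    have := key M le_rfl
    rwa [hfM] at this
  funext x
  have : P x * (∑ z : Fin M → X, Q z) = Q x * (∑ z : Fin M → X, P z) := by
    rw [Finset.mul_sum, Finset.mul_sum]
    exact Finset.sum_congr rfl fun z _ => hchain x z
  rwa [hPsum, hQsum, mul_one, mul_one] at this
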